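/- Let a > 0 and fix x, y with x² + y² < a². Define r(z) as the unique nonnegative solution of r⁴ − r²(x² + y² + z² − a²) − a²z² = 0. Then, as z → 0, r(z) = (a/√(a² − x² − y²))·|z| + O(z²) (equivalently, r(z)/|z| → a/√(a² − x² − y²)). -/

import Mathlib

open Filter Topology Set

/-- For `a > 0`, `x² + y² < a²` (a point of the disk), if `r z` is the nonnegative
solution of the Kerr–Schild quartic, then `r(z)/|z| → a/√(a² − x² − y²)` as `z → 0`
(`z ≠ 0`), i.e. `r(z) = (a/√(a² − x² − y²))·|z| + O(z²)`. -/
theorem stmt_1 (a x y : ℝ) (ha : 0 < a) (hxy : x ^ 2 + y ^ 2 < a ^ 2)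
    (r : ℝ → ℝ)
    (hr : ∀ z : ℝ, 0 ≤ r z ∧
      (r z) ^ 4 - (r z) ^ 2 * (x ^ 2 + y ^ 2 + z ^ 2 - a ^ 2) - a ^ 2 * z ^ 2 = 0) :
    Tendsto (fun z : ℝ => r z / |z|) (nhdsWithin 0 {0}ᶜ)
      (nhds (a / Real.sqrt (a ^ 2 - x ^ 2 - y ^ 2))) := by
  have hc0 : 0 < a ^ 2 - x ^ 2 - y ^ 2 := by nlinarith
  -- the explicit formula for r z / |z| when z ≠ 0
  have key : ∀ z : ℝ, z ≠ 0 → r z / |z| =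
      Real.sqrt (2 * a ^ 2 / (Real.sqrt ((x ^ 2 + y ^ 2 + z ^ 2 - a ^ 2) ^ 2
        + 4 * a ^ 2 * z ^ 2) - (x ^ 2 + y ^ 2 + z ^ 2 - a ^ 2))) := by
    intro z hz
    obtain ⟨hr0, hreq⟩ := hr z
    set b := x ^ 2 + y ^ 2 + z ^ 2 - a ^ 2 with hb
    set s := Real.sqrt (b ^ 2 + 4 * a ^ 2 * z ^ 2) with hs
    have hz2 : 0 < z ^ 2 := by positivity
    have hD : b ^ 2 < b ^ 2 + 4 * a ^ 2 * z ^ 2 := by nlinarith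
    have hs2 : s ^ 2 = b ^ 2 + 4 * a ^ 2 * z ^ 2 := Real.sq_sqrt (by positivity)
    have hsb : |b| < s := by
      have := Real.sqrt_lt_sqrt (sq_nonneg b) hD
      rwa [Real.sqrt_sq_eq_abs] at this
    have hbs : b < s := lt_of_le_of_lt (le_abs_self b) hsb
    have hnb : -s < b := by
      have := neg_abs_le b
      linarith
    have h3 : (2 * r z ^ 2 - b - s) * (2 * r z ^ 2 - b + s) = 0 := by
      nlinarith [hreq, hs2]
    have hu : r z ^ 2 = (b + s) / 2 := by
      rcases mul_eq_zero.1 h3 with h | h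
      · linarith
      · exfalso
        have h4 : (0:ℝ) ≤ r z ^ 2 := sq_nonneg _
        nlinarith
    have hrz : r z = Real.sqrt (r z ^ 2) := (Real.sqrt_sq hr0).symm
    have hzabs : |z| = Real.sqrt (z ^ 2) := (Real.sqrt_sq_eq_abs z).symm
    rw [hrz, hzabs, ← Real.sqrt_div (sq_nonneg _)]
    congr 1
    rw [hu]
    have hsbpos : 0 < s - b := by linarith
    field_simp
    nlinarith [hs2]
  -- the limit of the explicit formula
  have hD0 : Real.sqrt ((x ^ 2 + y ^ 2 + (0:ℝ) ^ 2 - a ^ 2) ^ 2 + 4 * a ^ 2 * (0:ℝ) ^ 2)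
      - (x ^ 2 + y ^ 2 + (0:ℝ) ^ 2 - a ^ 2) = 2 * (a ^ 2 - x ^ 2 - y ^ 2) := by
    have h1 : ((x ^ 2 + y ^ 2 + (0:ℝ) ^ 2 - a ^ 2) ^ 2 + 4 * a ^ 2 * (0:ℝ) ^ 2)
        = (a ^ 2 - x ^ 2 - y ^ 2) ^ 2 := by ring
    rw [h1, Real.sqrt_sq hc0.le]
    ring
  have hcont : Continuous fun z : ℝ =>
      Real.sqrt ((x ^ 2 + y ^ 2 + z ^ 2 - a ^ 2) ^ 2 + 4 * a ^ 2 * z ^ 2)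
        - (x ^ 2 + y ^ 2 + z ^ 2 - a ^ 2) := by fun_prop
  have hDlim : Tendsto (fun z : ℝ =>
      Real.sqrt ((x ^ 2 + y ^ 2 + z ^ 2 - a ^ 2) ^ 2 + 4 * a ^ 2 * z ^ 2)
        - (x ^ 2 + y ^ 2 + z ^ 2 - a ^ 2)) (nhds 0) (nhds (2 * (a ^ 2 - x ^ 2 - y ^ 2))) := by
    have := hcont.tendsto 0
    rwa [hD0] at this
  have hDiv : Tendsto (fun z : ℝ => 2 * a ^ 2 /
      (Real.sqrt ((x ^ 2 + y ^ 2 + z ^ 2 - a ^ 2) ^ 2 + 4 * a ^ 2 * z ^ 2)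
        - (x ^ 2 + y ^ 2 + z ^ 2 - a ^ 2))) (nhds 0)
      (nhds (2 * a ^ 2 / (2 * (a ^ 2 - x ^ 2 - y ^ 2)))) :=
    tendsto_const_nhds.div hDlim (by positivity)
  have hSqrt : Tendsto (fun z : ℝ => Real.sqrt (2 * a ^ 2 /
      (Real.sqrt ((x ^ 2 + y ^ 2 + z ^ 2 - a ^ 2) ^ 2 + 4 * a ^ 2 * z ^ 2)
        - (x ^ 2 + y ^ 2 + z ^ 2 - a ^ 2)))) (nhds 0)
      (nhds (a / Real.sqrt (a ^ 2 - x ^ 2 - y ^ 2))) := by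
    have h := hDiv.sqrt
    have hval : Real.sqrt (2 * a ^ 2 / (2 * (a ^ 2 - x ^ 2 - y ^ 2)))
        = a / Real.sqrt (a ^ 2 - x ^ 2 - y ^ 2) := by
      have h2 : 2 * a ^ 2 / (2 * (a ^ 2 - x ^ 2 - y ^ 2))
          = a ^ 2 / (a ^ 2 - x ^ 2 - y ^ 2) := by
        field_simp
      rw [h2, Real.sqrt_div (sq_nonneg a), Real.sqrt_sq ha.le]
    rwa [hval] at h
  have hfin := hSqrt.mono_left (nhdsWithin_le_nhds (s := {0}ᶜ))
  refine hfin.congr' ?_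
  filter_upwards [self_mem_nhdsWithin] with z hz
  exact (key z hz).symm
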